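/- Let Ω ⊆ ℝⁿ be a uniformly C² domain of type (α, β, K) with β < min{α, 2/(nK)}, and let R_* denote the reach of Γ = ∂Ω. Then there exists a constant C = C(α, β, K) > 0 such that R_* ≥ C > 0; more precisely, reach(Γ, z₀) ≥ min{1/(2nK), β/4} for every z₀ ∈ Γ. -/

import Mathlib

open Metric Set RealInnerProductSpace

set_option maxHeartbeats 1000000
noncomputable section

lemma taylor_quadratic_bound {E : Type*} [NormedAddCommGroup E] [NormedSpace ℝ E]
    {α K : ℝ} (hα : 0 < α) (hK : 0 ≤ K) (h : E → ℝ)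
    (hc : ContDiffOn ℝ 2 h (ball 0 α)) (h0 : h 0 = 0)
    (hd0 : fderivWithin ℝ h (ball 0 α) 0 = 0)
    (hK2 : ∀ v ∈ ball (0 : E) α, ‖iteratedFDerivWithin ℝ 2 h (ball 0 α) v‖ ≤ K) :
    ∀ v ∈ ball (0 : E) α, |h v| ≤ K * ‖v‖ ^ 2 := by
  intro v hv
  have hball : IsOpen (ball (0 : E) α) := isOpen_ball
  have h0mem : (0 : E) ∈ ball (0 : E) α := mem_ball_self hα
  have hdiff : ∀ w ∈ ball (0 : E) α, DifferentiableAt ℝ h w := fun w hw =>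
    (hc.contDiffAt (hball.mem_nhds hw)).differentiableAt (by norm_num)
  have hg : ∀ w ∈ ball (0 : E) α, DifferentiableAt ℝ (fderiv ℝ h) w := fun w hw =>
    ((hc.contDiffAt (hball.mem_nhds hw)).fderiv_right (m := 1) le_rfl).differentiableAt (by norm_num)
  have hg0 : fderiv ℝ h 0 = 0 := by
    rw [← fderivWithin_of_isOpen hball h0mem, hd0]
  have hK2' : ∀ w ∈ ball (0 : E) α, ‖fderiv ℝ (fderiv ℝ h) w‖ ≤ K := by
    intro w hw
    have e1 : ‖fderiv ℝ (fderiv ℝ h) w‖ = ‖iteratedFDeriv ℝ 2 h w‖ := by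
      rw [← norm_iteratedFDeriv_fderiv (n := 1), ← norm_iteratedFDeriv_fderiv (n := 0),
        norm_iteratedFDeriv_zero]
    rw [e1, ← iteratedFDerivWithin_of_isOpen 2 hball hw]
    exact hK2 w hw
  have hgrad : ∀ w ∈ ball (0 : E) α, ‖fderiv ℝ h w‖ ≤ K * ‖w‖ := by
    intro w hw
    have hwα : ‖w‖ < α := by simpa [mem_ball, dist_eq_norm] using hw
    have hsub : closedBall (0 : E) ‖w‖ ⊆ ball 0 α := closedBall_subset_ball hwα
    have := (convex_closedBall (0 : E) ‖w‖).norm_image_sub_le_of_norm_fderiv_le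
      (f := fderiv ℝ h) (C := K) (x := 0) (y := w)
      (fun x hx => hg x (hsub hx)) (fun x hx => hK2' x (hsub hx))
      (mem_closedBall_self (norm_nonneg w)) (mem_closedBall.2 (by simp [dist_eq_norm]))
    simpa [hg0] using this
  have hvα : ‖v‖ < α := by simpa [mem_ball, dist_eq_norm] using hv
  have hsub : closedBall (0 : E) ‖v‖ ⊆ ball 0 α := closedBall_subset_ball hvα
  have key := (convex_closedBall (0 : E) ‖v‖).norm_image_sub_le_of_norm_fderiv_le
    (f := h) (C := K * ‖v‖) (x := 0) (y := v)
    (fun x hx => hdiff x (hsub hx))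
    (fun x hx => le_trans (hgrad x (hsub hx))
      (mul_le_mul_of_nonneg_left (by simpa [dist_eq_norm] using mem_closedBall.1 hx) hK))
    (mem_closedBall_self (norm_nonneg v)) (mem_closedBall.2 (by simp [dist_eq_norm]))
  calc |h v| = ‖h v - h 0‖ := by rw [h0, sub_zero, Real.norm_eq_abs]
    _ ≤ K * ‖v‖ * ‖v - 0‖ := key
    _ = K * ‖v‖ ^ 2 := by rw [sub_zero]; ring

theorem stmt_6 (n : ℕ) (hn : 2 ≤ n) (α β K : ℝ)
    (hα : 0 < α) (hβ : 0 < β) (hK : 0 < K)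
    (hβα : β < α) (hβK : β < 2 / (n * K))
    (Ω : Set (EuclideanSpace ℝ (Fin n))) (hΩ : IsOpen Ω)
    (ν : EuclideanSpace ℝ (Fin n) → EuclideanSpace ℝ (Fin n))
    -- uniformly `C²` domain of type (α, β, K): local graph representation at every
    -- boundary point `z₀`, with outward unit normal `ν z₀`
    (charts : ∀ z₀ ∈ closure Ω \ Ω,
      ‖ν z₀‖ = 1 ∧
      ∃ h : (Submodule.span ℝ {ν z₀})ᗮ → ℝ,
        ContDiffOn ℝ 2 h (ball 0 α) ∧
        h 0 = 0 ∧
        fderivWithin ℝ h (ball 0 α) 0 = 0 ∧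
        (∀ v ∈ ball (0 : (Submodule.span ℝ {ν z₀})ᗮ) α,
          |h v| ≤ K ∧ ‖iteratedFDerivWithin ℝ 1 h (ball 0 α) v‖ ≤ K ∧
            ‖iteratedFDerivWithin ℝ 2 h (ball 0 α) v‖ ≤ K) ∧
        (∀ (v : (Submodule.span ℝ {ν z₀})ᗮ) (t : ℝ), ‖v‖ < α → |t - h v| < β →
          (z₀ + (v : EuclideanSpace ℝ (Fin n)) - t • ν z₀ ∈ Ω ↔ h v < t) ∧
          (z₀ + (v : EuclideanSpace ℝ (Fin n)) - t • ν z₀ ∈ closure Ω \ Ω ↔ t = h v))) :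
    -- conclusion: reach(Γ, z₀) ≥ min {1/(2nK), β/4} for every z₀ ∈ Γ,
    -- i.e. every point z₀ - ℓ ν(z₀) with 0 < ℓ < min {1/(2nK), β/4} has a unique
    -- nearest point on Γ = closure Ω \ Ω
    ∀ z₀ ∈ closure Ω \ Ω, ∀ ℓ : ℝ, 0 < ℓ → ℓ < min (1 / (2 * n * K)) (β / 4) →
      ∃! z, z ∈ closure Ω \ Ω ∧
        dist (z₀ - ℓ • ν z₀) z = infDist (z₀ - ℓ • ν z₀) (closure Ω \ Ω) := by
  intro z₀ hz₀ ℓ hℓ hℓm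
  obtain ⟨hν, h, hc, h0, hd0, hbd, hchart⟩ := charts z₀ hz₀
  obtain ⟨x, hx⟩ : ∃ x, x = z₀ - ℓ • ν z₀ := ⟨_, rfl⟩
  rw [← hx]
  have hn' : (2 : ℝ) ≤ (n : ℝ) := by exact_mod_cast hn
  have hℓ1 : ℓ < β / 4 := lt_of_lt_of_le hℓm (min_le_right _ _)
  have hℓ2 : ℓ < 1 / (2 * n * K) := lt_of_lt_of_le hℓm (min_le_left _ _)
  have hpos : (0 : ℝ) < 2 * n * K := by positivity
  have hKl : K * ℓ < 1 / 4 := by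
    have h1 : ℓ * (2 * n * K) < 1 := by
      rw [lt_div_iff₀ hpos] at hℓ2; linarith
    nlinarith [hℓ.le, hK.le]
  have hquad := taylor_quadratic_bound hα hK.le h hc h0 hd0 (fun v hv => (hbd v hv).2.2)
  have hdxz₀ : dist x z₀ = ℓ := by
    rw [dist_eq_norm]
    have : x - z₀ = -(ℓ • ν z₀) := by rw [hx]; abel
    rw [this, norm_neg, norm_smul, hν, Real.norm_eq_abs, abs_of_pos hℓ, mul_one]
  have claim : ∀ z ∈ closure Ω \ Ω, dist z z₀ ≤ 2 * ℓ →
      ℓ ≤ dist x z ∧ (dist x z ≤ ℓ → z = z₀) := by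
    intro z hz hz2
    obtain ⟨c, hcdef⟩ : ∃ c : ℝ, c = ⟪ν z₀, z - z₀⟫ := ⟨_, rfl⟩
    have hcb : |c| ≤ ‖z - z₀‖ := by
      have := abs_real_inner_le_norm (ν z₀) (z - z₀)
      rw [hν, one_mul, ← hcdef] at this
      exact this
    obtain ⟨v₀, hv₀def⟩ : ∃ v₀ : EuclideanSpace ℝ (Fin n), v₀ = z - z₀ - c • ν z₀ := ⟨_, rfl⟩
    have hνν : ⟪ν z₀, ν z₀⟫ = 1 := by
      rw [real_inner_self_eq_norm_sq, hν]; norm_num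
    have hv₀ : ⟪ν z₀, v₀⟫ = 0 := by
      rw [hv₀def, inner_sub_right, real_inner_smul_right, hνν, hcdef]
      ring
    have hmem : v₀ ∈ (Submodule.span ℝ {ν z₀})ᗮ :=
      Submodule.mem_orthogonal_singleton_iff_inner_right.mpr hv₀
    set v : (Submodule.span ℝ {ν z₀})ᗮ := ⟨v₀, hmem⟩ with hvdef
    have hnv : ‖v‖ = ‖v₀‖ := rfl
    have hdecomp : z - z₀ = v₀ + c • ν z₀ := by rw [hv₀def]; abel
    have hpyth : ‖z - z₀‖ ^ 2 = ‖v₀‖ ^ 2 + c ^ 2 := by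
      rw [hdecomp, norm_add_sq_real, real_inner_smul_right, real_inner_comm, hv₀,
        norm_smul, Real.norm_eq_abs, hν]
      simp only [mul_one, mul_zero, sq_abs]
      ring
    have hzn : ‖z - z₀‖ ≤ 2 * ℓ := by rwa [dist_eq_norm] at hz2
    have hvle : ‖v₀‖ ≤ ‖z - z₀‖ := by
      nlinarith [norm_nonneg v₀, norm_nonneg (z - z₀), sq_nonneg c]
    have hvα : ‖v‖ < α := by rw [hnv]; nlinarith
    have hq : |h v| ≤ K * ‖v‖ ^ 2 := hquad v (mem_ball_zero_iff.mpr hvα)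
    have hhle : |h v| ≤ ℓ := by
      rw [hnv] at hq
      nlinarith [abs_nonneg (h v), norm_nonneg v₀, hℓ, hK.le]
    have htb : |(-c) - h v| < β := by
      have h1 : |(-c) - h v| ≤ |c| + |h v| := by
        calc |(-c) - h v| ≤ |(-c)| + |h v| := abs_sub _ _
          _ = |c| + |h v| := by rw [abs_neg]
      linarith [hcb.trans hzn]
    have hΓ := (hchart v (-c) hvα htb).2
    have hveq : z₀ + (v : EuclideanSpace ℝ (Fin n)) - (-c) • ν z₀ = z := by
      have : (v : EuclideanSpace ℝ (Fin n)) = v₀ := rfl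
      rw [this, hv₀def, neg_smul]
      abel
    rw [hveq] at hΓ
    have htc : -c = h v := hΓ.mp hz
    have hc' : c = -(h v) := by linarith
    have hxz : x - z = -(v₀ + (c + ℓ) • ν z₀) := by
      rw [hx, hv₀def, add_smul]
      abel
    have hdist2 : dist x z ^ 2 = ‖v₀‖ ^ 2 + (c + ℓ) ^ 2 := by
      rw [dist_eq_norm, hxz, norm_neg, norm_add_sq_real, real_inner_smul_right,
        real_inner_comm, hv₀, norm_smul, Real.norm_eq_abs, hν]
      simp only [mul_one, mul_zero, sq_abs]
      ring
    rw [hc'] at hdist2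
    rw [hnv] at hq
    have habs : -(K * ‖v₀‖^2) ≤ h v ∧ h v ≤ K * ‖v₀‖^2 := abs_le.mp hq
    have hge2 : ℓ ^ 2 + (1/2) * ‖v₀‖ ^ 2 ≤ dist x z ^ 2 := by
      rw [hdist2]
      nlinarith [habs.1, habs.2, hℓ, sq_nonneg (h v), norm_nonneg v₀]
    constructor
    · have h1 : ℓ ^ 2 ≤ dist x z ^ 2 := by
        have := sq_nonneg ‖v₀‖
        linarith
      exact (pow_le_pow_iff_left₀ hℓ.le dist_nonneg two_ne_zero).mp h1
    · intro hle
      have hd2 : dist x z ^ 2 ≤ ℓ ^ 2 := pow_le_pow_left₀ dist_nonneg hle 2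
      have hsq0 : ‖v₀‖ ^ 2 = 0 := le_antisymm (by linarith) (sq_nonneg _)
      have hv0 : ‖v₀‖ = 0 := pow_eq_zero_iff two_ne_zero |>.mp hsq0
      have hv0' : v₀ = 0 := norm_eq_zero.mp hv0
      have hveq0 : v = 0 := by
        apply Subtype.ext
        exact hv0'
      have hh0 : h v = 0 := by rw [hveq0, h0]
      have : z - z₀ = 0 := by
        rw [hdecomp, hv0', hc', hh0]
        simp
      have := sub_eq_zero.mp this
      exact this
  have hlow : ∀ z ∈ closure Ω \ Ω, ℓ ≤ dist x z := by
    intro z hz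
    by_cases hcase : dist z z₀ ≤ 2 * ℓ
    · exact (claim z hz hcase).1
    · push_neg at hcase
      have ht := dist_triangle z x z₀
      rw [dist_comm z x] at ht
      rw [dist_comm z z₀] at hcase
      have : dist z₀ z = dist z z₀ := dist_comm _ _
      linarith [dist_comm z₀ z ▸ hcase, hdxz₀, ht, dist_comm x z ▸ le_refl (dist x z)]
  have hinf : infDist x (closure Ω \ Ω) = ℓ := by
    refine le_antisymm (hdxz₀ ▸ infDist_le_dist_of_mem hz₀) ?_
    by_contra hcon
    push_neg at hcon
    obtain ⟨y, hy, hyd⟩ := (infDist_lt_iff ⟨z₀, hz₀⟩).mp hcon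
    exact absurd (hlow y hy) (not_le.mpr hyd)
  refine ⟨z₀, ⟨hz₀, by rw [hinf]; exact hdxz₀⟩, ?_⟩
  rintro z ⟨hz, hdz⟩
  have hle : dist x z ≤ ℓ := by rw [hdz, hinf]
  have h2 : dist z z₀ ≤ 2 * ℓ := by
    have ht := dist_triangle z x z₀
    rw [dist_comm z x] at ht
    linarith
  exact (claim z hz h2).2 hle
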